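/- arXiv:2409.00832 — 5 statements merged into one kernel-verified Lean document; each statement's English description precedes it below -/
import Mathlib

section
/- For every integer n ≥ 1, every integer m ≥ 2, and every vector (μ_1,…,μ_n) of integers with μ_i ≥ m for all i, there exists an ordinal game with strict unilateral deviations, agent set {1,…,n}, and action sets of sizes |A_i| = μ_i, that has no satisficing equilibrium with respect to (m − ⌈m/n⌉, …, m − ⌈m/n⌉); that is, at every action profile at least one agent fails to be (m − ⌈m/n⌉)-satisficed. -/
/-!
Statement 0: For every n ≥ 1, m ≥ 2, and action-set sizes μ_i ≥ m, there is an ordinal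
game with strict unilateral deviations, agent set Fin n and action sets Fin (μ i),
having no satisficing equilibrium with respect to (m − ⌈m/n⌉, …, m − ⌈m/n⌉).
-/

namespace Stmt0

/-- Action profiles of a game with agents `Fin n` and action sets `Fin (μ i)`. -/
abbrev Profile (n : ℕ) (μ : Fin n → ℕ) := (i : Fin n) → Fin (μ i)

/-- Strict part of agent `i`'s preference relation. -/
def strictPref {n : ℕ} {μ : Fin n → ℕ}
    (pref : (i : Fin n) → Profile n μ → Profile n μ → Prop)
    (i : Fin n) (a b : Profile n μ) : Prop :=
  pref i a b ∧ ¬ pref i b a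

/-- `rank_i(a | ⪰_i) = 1 + |{x ∈ A_i : (x, a_{-i}) ≻_i (a_i, a_{-i})}|`. -/
noncomputable def rank {n : ℕ} {μ : Fin n → ℕ}
    (pref : (i : Fin n) → Profile n μ → Profile n μ → Prop)
    (i : Fin n) (a : Profile n μ) : ℕ :=
  1 + Nat.card {x : Fin (μ i) // strictPref pref i (Function.update a i x) a}

/-- Utility (lower is better) used to build the counterexample game. -/
def util (n m c : ℕ) (μ : Fin n → ℕ) (i : Fin n) (a : Profile n μ) : ℕ :=
  if ((a i : ℕ)) < m then
    ((∑ j, ((a j : ℕ) % m)) + (m - c * (i : ℕ) % m)) % m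
  else (a i : ℕ)

lemma sum_update (n m : ℕ) (μ : Fin n → ℕ) (i : Fin n) (a : Profile n μ) (x : Fin (μ i)) :
    (∑ j, ((Function.update a i x j : ℕ) % m)) =
      (x : ℕ) % m + ∑ j ∈ Finset.univ.erase i, ((a j : ℕ) % m) := by
  rw [← Finset.add_sum_erase Finset.univ (fun j => ((Function.update a i x j : ℕ) % m))
    (Finset.mem_univ i)]
  congr 1
  · rw [Function.update_self]
  · refine Finset.sum_congr rfl (fun j hj => ?_)
    rw [Function.update_of_ne (Finset.ne_of_mem_erase hj)]

lemma util_update (n m c : ℕ) (μ : Fin n → ℕ) (i : Fin n) (a : Profile n μ) (x : Fin (μ i)) :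
    util n m c μ i (Function.update a i x) =
      if (x : ℕ) < m then
        ((x : ℕ) + ((∑ j ∈ Finset.univ.erase i, ((a j : ℕ) % m)) + (m - c * (i : ℕ) % m))) % m
      else (x : ℕ) := by
  unfold util
  rw [Function.update_self, sum_update]
  by_cases hx : (x : ℕ) < m
  · rw [if_pos hx, if_pos hx, Nat.mod_eq_of_lt hx, Nat.add_assoc]
  · rw [if_neg hx, if_neg hx]

lemma util_self (n m c : ℕ) (μ : Fin n → ℕ) (i : Fin n) (a : Profile n μ) :
    util n m c μ i a =
      if ((a i : ℕ)) < m then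
        (((a i : ℕ)) + ((∑ j ∈ Finset.univ.erase i, ((a j : ℕ) % m)) + (m - c * (i : ℕ) % m))) % m
      else ((a i : ℕ)) := by
  have h := util_update n m c μ i a (a i)
  rwa [Function.update_eq_self] at h

/-- The arithmetic core: for every `S` there is an agent index whose badness is at
least `m - c`, where `c = ⌈m/n⌉`. -/
lemma key_lemma (n m c S : ℕ) (hn : 0 < n) (hm : 0 < m) (hc1 : 1 ≤ c)
    (hcm : c ≤ m) (hnc : m ≤ n * c) :
    ∃ i : ℕ, i < n ∧ m - c ≤ (S + (m - c * i % m)) % m := by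
  have hmod : ∀ k, (S + k) % m = (S % m + k) % m := fun k => (Nat.mod_add_mod S m k).symm
  set s := S % m with hs
  have hsm : s < m := Nat.mod_lt _ hm
  by_cases hcase : m - c ≤ s
  · refine ⟨0, hn, ?_⟩
    rw [Nat.mul_zero, Nat.zero_mod, Nat.sub_zero, hmod, Nat.add_mod_right,
      Nat.mod_eq_of_lt hsm]
    exact hcase
  · push_neg at hcase
    set q := s / c with hq
    set r := s % c with hr
    have hqr : c * q + r = s := Nat.div_add_mod s c
    have hrc : r < c := Nat.mod_lt _ (by omega)
    have hmul : c * (n - 1) + c = c * n := by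
      rw [← Nat.mul_succ]
      congr 1
      omega
    have hcn : n * c = c * n := Nat.mul_comm n c
    have hq1 : c * q < c * (n - 1) := by omega
    have hqlt : q < n - 1 := Nat.lt_of_mul_lt_mul_left hq1
    have hci : c * (q + 1) = c * q + c := by ring
    have hcilt : c * (q + 1) < m := by omega
    refine ⟨q + 1, by omega, ?_⟩
    rw [hmod, Nat.mod_eq_of_lt hcilt, Nat.mod_eq_of_lt (by omega : s + (m - c * (q + 1)) < m)]
    omega

theorem stmt0 (n m : ℕ) (hn : 1 ≤ n) (hm : 2 ≤ m) (μ : Fin n → ℕ) (hμ : ∀ i, m ≤ μ i) :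
    ∃ pref : (i : Fin n) → Profile n μ → Profile n μ → Prop,
      -- each ⪰_i is a total preorder
      (∀ i a b, pref i a b ∨ pref i b a) ∧
      (∀ i a b c, pref i a b → pref i b c → pref i a c) ∧
      -- strict unilateral deviations
      (∀ (i : Fin n) (a : Profile n μ) (x x' : Fin (μ i)), x ≠ x' →
        (strictPref pref i (Function.update a i x) (Function.update a i x') ∨
          strictPref pref i (Function.update a i x') (Function.update a i x))) ∧
      -- no (m − ⌈m/n⌉, …, m − ⌈m/n⌉)-satisficing equilibrium: at every profile some
      -- agent fails to be (m − ⌈m/n⌉)-satisficed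
      (∀ a : Profile n μ, ∃ i : Fin n, ¬ rank pref i a ≤ m - (m + n - 1) / n) := by
  classical
  have hn0 : 0 < n := hn
  have hm0 : 0 < m := by omega
  set c := (m + n - 1) / n with hcdef
  -- basic facts about c
  have hc1 : 1 ≤ c := (Nat.one_le_div_iff hn0).mpr (by omega)
  have hcm : c ≤ m := by
    have h1 : m + n - 1 ≤ n * m := by
      obtain ⟨k, rfl⟩ : ∃ k, n = k + 1 := ⟨n - 1, by omega⟩
      have hk : k ≤ k * m := Nat.le_mul_of_pos_right k hm0
      have : (k + 1) * m = k * m + m := by ring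
      omega
    calc c ≤ n * m / n := Nat.div_le_div_right h1
    _ = m := Nat.mul_div_cancel_left m hn0
  have hnc : m ≤ n * c := by
    have h1 : n * c + (m + n - 1) % n = m + n - 1 := by
      rw [hcdef]; exact Nat.div_add_mod _ _
    have h2 : (m + n - 1) % n < n := Nat.mod_lt _ hn0
    omega
  have hstrict : ∀ (i : Fin n) (a b : Profile n μ),
      strictPref (fun i (a b : Profile n μ) => util n m c μ i a ≤ util n m c μ i b) i a b ↔
        util n m c μ i a < util n m c μ i b := by
    intro i a b
    simp only [strictPref]
    omega
  have hUinj : ∀ (i : Fin n) (a : Profile n μ) (x x' : Fin (μ i)),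
      util n m c μ i (Function.update a i x) = util n m c μ i (Function.update a i x') →
        x = x' := by
    intro i a x x' h
    rw [util_update, util_update] at h
    by_cases hx : (x : ℕ) < m <;> by_cases hx' : (x' : ℕ) < m
    · rw [if_pos hx, if_pos hx'] at h
      have h2 : (x : ℕ) ≡ (x' : ℕ) [MOD m] := Nat.ModEq.add_right_cancel' _ h
      have h3 : (x : ℕ) % m = (x' : ℕ) % m := h2
      rw [Nat.mod_eq_of_lt hx, Nat.mod_eq_of_lt hx'] at h3
      exact Fin.ext h3
    · rw [if_pos hx, if_neg hx'] at h
      have := Nat.mod_lt ((x : ℕ) +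
        ((∑ j ∈ Finset.univ.erase i, ((a j : ℕ) % m)) + (m - c * (i : ℕ) % m))) hm0
      omega
    · rw [if_neg hx, if_pos hx'] at h
      have := Nat.mod_lt ((x' : ℕ) +
        ((∑ j ∈ Finset.univ.erase i, ((a j : ℕ) % m)) + (m - c * (i : ℕ) % m))) hm0
      omega
    · rw [if_neg hx, if_neg hx'] at h
      exact Fin.ext h
  refine ⟨fun i a b => util n m c μ i a ≤ util n m c μ i b, fun i a b => Nat.le_total _ _,
    fun i a b c' h1 h2 => Nat.le_trans h1 h2, ?_, ?_⟩
  · -- strict unilateral deviations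
    intro i a x x' hne
    rcases Nat.lt_trichotomy (util n m c μ i (Function.update a i x))
      (util n m c μ i (Function.update a i x')) with h | h | h
    · exact Or.inl ((hstrict i _ _).mpr h)
    · exact absurd (hUinj i a x x' h) hne
    · exact Or.inr ((hstrict i _ _).mpr h)
  · -- no satisficing equilibrium
    intro a
    -- it suffices to produce m - c many strictly better deviations for some agent
    have hcard : ∀ (i : Fin n) (f : Fin (m - c) → Fin (μ i)),
        Function.Injective f →
        (∀ y, util n m c μ i (Function.update a i (f y)) < util n m c μ i a) →
        ¬ rank (fun i (a b : Profile n μ) => util n m c μ i a ≤ util n m c μ i b) i a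
            ≤ m - c := by
      intro i f hinj hlt
      have hle : m - c ≤ Nat.card {x : Fin (μ i) //
          strictPref (fun i (a b : Profile n μ) => util n m c μ i a ≤ util n m c μ i b) i
            (Function.update a i x) a} := by
        have h := Nat.card_le_card_of_injective
          (fun y : Fin (m - c) =>
            (⟨f y, (hstrict i _ _).mpr (hlt y)⟩ : {x : Fin (μ i) //
              strictPref (fun i (a b : Profile n μ) => util n m c μ i a ≤ util n m c μ i b) i
                (Function.update a i x) a}))
          (fun y₁ y₂ hy => hinj (by simpa using congrArg Subtype.val hy))
        simpa using h
      simp only [rank]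
      omega
    by_cases hA : ∀ i, ((a i : ℕ)) < m
    · -- all actions small: use the arithmetic key lemma
      set S : ℕ := ∑ j, ((a j : ℕ) % m) with hS
      obtain ⟨i0, hi0n, hkey⟩ := key_lemma n m c S hn0 hm0 hc1 hcm hnc
      refine ⟨⟨i0, hi0n⟩, ?_⟩
      set i : Fin n := ⟨i0, hi0n⟩ with hi
      set t : ℕ := ∑ j ∈ Finset.univ.erase i, ((a j : ℕ) % m) with ht
      set K : ℕ := t + (m - c * (i : ℕ) % m) with hK
      have hSt : S = (a i : ℕ) % m + t := by
        have h := sum_update n m μ i a (a i)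
        rwa [Function.update_eq_self] at h
      have hua : util n m c μ i a = (S + (m - c * (i : ℕ) % m)) % m := by
        rw [util_self, if_pos (hA i), ← ht, hSt, Nat.mod_eq_of_lt (hA i), Nat.add_assoc]
      have huage : m - c ≤ util n m c μ i a := by rw [hua]; exact hkey
      have hKmod : K % m < m := Nat.mod_lt _ hm0
      have hKm : m - K % m + K = m * (1 + K / m) := by
        have h1 := Nat.div_add_mod K m
        rw [Nat.mul_add, Nat.mul_one]
        omega
      refine hcard i (fun y => ⟨((y : ℕ) + (m - K % m)) % m,
        lt_of_lt_of_le (Nat.mod_lt _ hm0) (hμ i)⟩) ?_ ?_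
      · -- injectivity
        intro y₁ y₂ h
        simp only [Fin.mk.injEq] at h
        have h2 : (y₁ : ℕ) ≡ (y₂ : ℕ) [MOD m] := Nat.ModEq.add_right_cancel' _ h
        have h3 : (y₁ : ℕ) % m = (y₂ : ℕ) % m := h2
        have hy₁ : (y₁ : ℕ) < m := lt_of_lt_of_le y₁.isLt (by omega)
        have hy₂ : (y₂ : ℕ) < m := lt_of_lt_of_le y₂.isLt (by omega)
        rw [Nat.mod_eq_of_lt hy₁, Nat.mod_eq_of_lt hy₂] at h3
        exact Fin.ext h3
      · -- each deviation is strictly better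
        intro y
        have hy : (y : ℕ) < m - c := y.isLt
        have hy' : (y : ℕ) < m := by omega
        have hval : (((y : ℕ) + (m - K % m)) % m : ℕ) < m := Nat.mod_lt _ hm0
        rw [util_update]
        simp only
        rw [if_pos hval, ← ht, ← hK, Nat.mod_add_mod, Nat.add_assoc]
        have h0 : (m - K % m + K) % m = 0 := by rw [hKm, Nat.mul_mod_right]
        rw [Nat.add_mod, h0, Nat.add_zero,
          Nat.mod_eq_of_lt (Nat.mod_lt (y : ℕ) hm0), Nat.mod_eq_of_lt hy']
        omega
    · -- some action is large: every smaller action is strictly better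
      push_neg at hA
      obtain ⟨i, hi⟩ := hA
      refine ⟨i, ?_⟩
      have hua : util n m c μ i a = (a i : ℕ) := by
        rw [util_self, if_neg (Nat.not_lt.mpr hi)]
      refine hcard i (fun y => ⟨(y : ℕ),
        lt_of_lt_of_le (lt_of_lt_of_le y.isLt (by omega)) (hμ i)⟩) ?_ ?_
      · intro y₁ y₂ h
        simp only [Fin.mk.injEq] at h
        exact Fin.ext h
      · intro y
        have hy : (y : ℕ) < m := lt_of_lt_of_le y.isLt (by omega)
        rw [util_update]
        simp only
        rw [if_pos hy, hua]
        calc ((y : ℕ) + ((∑ j ∈ Finset.univ.erase i, ((a j : ℕ) % m))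
            + (m - c * (i : ℕ) % m))) % m < m := Nat.mod_lt _ hm0
        _ ≤ (a i : ℕ) := hi

end Stmt0
end

section
/- Every k-approximate potential game possesses a k-satisficing equilibrium: if a finite ordinal game (N, A, ⪰) is a k-approximate potential game for positive integers k = (k_i)_{i∈N}, then there exists an action profile a ∈ 𝒜 at which every agent i is k_i-satisficed. -/
/-!
Statement 3: Every k-approximate potential game possesses a k-satisficing equilibrium.
-/

namespace Stmt3

/-- Action profiles of a game with agents `Fin n` and action sets `Fin (m i)`. -/
abbrev Profile (n : ℕ) (m : Fin n → ℕ) := (i : Fin n) → Fin (m i)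

/-- Strict part of a binary relation. -/
def strictRel {α : Sort*} (r : α → α → Prop) (a b : α) : Prop := r a b ∧ ¬ r b a

/-- `rank_i(a | ⪰_i) = 1 + |{x ∈ A_i : (x, a_{-i}) ≻_i (a_i, a_{-i})}|`. -/
noncomputable def rankPref {n : ℕ} {m : Fin n → ℕ}
    (pref : (i : Fin n) → Profile n m → Profile n m → Prop)
    (i : Fin n) (a : Profile n m) : ℕ :=
  1 + Nat.card {x : Fin (m i) // strictRel (pref i) (Function.update a i x) a}

/-- `rank_i(a | ⊵) = 1 + |{x ∈ A_i : (x, a_{-i}) ⊳ a}|` for a preorder `⊵` on profiles. -/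
noncomputable def rankPot {n : ℕ} {m : Fin n → ℕ}
    (pot : Profile n m → Profile n m → Prop)
    (i : Fin n) (a : Profile n m) : ℕ :=
  1 + Nat.card {x : Fin (m i) // strictRel pot (Function.update a i x) a}

theorem stmt3 (n : ℕ) (hn : 1 ≤ n) (m : Fin n → ℕ) (hm : ∀ i, 2 ≤ m i)
    (pref : (i : Fin n) → Profile n m → Profile n m → Prop)
    -- each ⪰_i is a total preorder
    (htotal : ∀ i a b, pref i a b ∨ pref i b a)
    (htrans : ∀ i a b c, pref i a b → pref i b c → pref i a c)
    (k : Fin n → ℕ) (hk : ∀ i, 1 ≤ k i)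
    -- the game is a k-approximate potential game, with witnessing preorder `pot`
    (pot : Profile n m → Profile n m → Prop)
    (hrefl : ∀ a, pot a a)
    (hpottrans : ∀ a b c, pot a b → pot b c → pot a c)
    (happrox : ∀ (i : Fin n) (a : Profile n m),
      (rankPref pref i a : ℤ) - (rankPot pot i a : ℤ) < (k i : ℤ)) :
    -- there is a profile at which every agent i is k_i-satisficed
    ∃ a : Profile n m, ∀ i : Fin n, rankPref pref i a ≤ k i := by

  -- strictRel pot is transitive and irreflexive; find a pot-maximal profile
  classical
  set lt := strictRel pot with hlt
  have hirr : ∀ a, ¬ lt a a := fun a h => h.2 h.1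
  have hltrans : ∀ a b c, lt a b → lt b c → lt a c := by
    rintro a b c ⟨hab, hba⟩ ⟨hbc, hcb⟩
    exact ⟨hpottrans a b c hab hbc, fun hca => hcb (hpottrans c a b hca hab)⟩
  -- find maximal element of finite nonempty type w.r.t. lt
  have hne : Nonempty (Profile n m) := ⟨fun i => ⟨0, lt_of_lt_of_le Nat.zero_lt_two (hm i)⟩⟩
  obtain ⟨a0⟩ := hne
  have hmax : ∃ a : Profile n m, ∀ b, ¬ lt b a := by
    by_contra h
    push_neg at h
    choose f hf using h
    -- build an infinite ascending chain, contradiction with finiteness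
    let g : ℕ → Profile n m := fun t => f^[t] a0
    have hchain : ∀ s t, s < t → lt (g t) (g s) := by
      intro s t hst
      induction t with
      | zero => omega
      | succ t ih =>
        rcases Nat.lt_succ_iff_lt_or_eq.mp hst with h1 | h1
        · exact hltrans _ _ _ (by
            simpa [g, Function.iterate_succ_apply'] using hf (g t)) (ih h1)
        · subst h1
          simpa [g, Function.iterate_succ_apply'] using hf (g s)
    have hinj : Function.Injective g := by
      intro s t h
      by_contra hne'
      rcases Nat.lt_or_ge s t with h1 | h1
      · exact hirr _ (h ▸ hchain s t h1)
      · exact hirr _ (h ▸ hchain t s (lt_of_le_of_ne h1 (Ne.symm hne')))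
    obtain ⟨s, t, hst, heq⟩ := Finite.exists_ne_map_eq_of_infinite g
    exact hst (hinj heq)
  obtain ⟨a, ha⟩ := hmax
  refine ⟨a, fun i => ?_⟩
  have hempty : IsEmpty {x : Fin (m i) // strictRel pot (Function.update a i x) a} := by
    constructor
    rintro ⟨x, hx⟩
    exact ha (Function.update a i x) hx
  have hcard : Nat.card {x : Fin (m i) // strictRel pot (Function.update a i x) a} = 0 :=
    Nat.card_of_isEmpty
  have hrp : rankPot pot i a = 1 := by simp [rankPot, hcard]
  have := happrox i a
  rw [hrp] at this
  have hk' := hk i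
  omega

end Stmt3
end

section
/- For any integers n ≥ 1, m ≥ 2, and k ≥ 1, a solution φ on Γ_{n,m} satisfies one-person k-satisficing behavior, consistency, and converse consistency if and only if φ(g) equals the set of (k,…,k)-satisficing equilibria of g for every game g ∈ Γ_{n,m}. -/
namespace Solutions

/-- A game with agent set `N ⊆ Fin n` (so at most `n` agents) and action set
`A i ⊆ Fin m` (so at most `m` actions) for each agent `i ∈ N`, together with a
total preorder (preference relation) for each agent on the set of action profiles. -/
structure Game (n m : ℕ) where
  N : Finset (Fin n)
  Nne : N.Nonempty
  A : Fin n → Finset (Fin m)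
  Atwo : ∀ i ∈ N, 2 ≤ (A i).card
  pref : (i : N) → ((j : N) → A j.1) → ((j : N) → A j.1) → Prop
  total : ∀ i a b, pref i a b ∨ pref i b a
  trans : ∀ i a b c, pref i a b → pref i b c → pref i a c

variable {n m : ℕ}

/-- The set of action profiles of `g`. -/
abbrev Game.Prof (g : Game n m) := (j : g.N) → g.A j.1

/-- Strict part `≻_i` of agent `i`'s preference relation. -/
def Game.strict (g : Game n m) (i : g.N) (a b : g.Prof) : Prop :=
  g.pref i a b ∧ ¬ g.pref i b a

/-- `rank_i(a | ⪰_i) = 1 + |{x ∈ A_i : (x, a_{-i}) ≻_i (a_i, a_{-i})}|`. -/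
noncomputable def Game.rank (g : Game n m) (i : g.N) (a : g.Prof) : ℕ :=
  1 + Nat.card {x : g.A i.1 // g.strict i (Function.update a i x) a}

/-- The game has strict preferences over unilateral deviations. -/
def Game.StrictUD (g : Game n m) : Prop :=
  ∀ (i : g.N) (a : g.Prof) (x x' : g.A i.1), x ≠ x' →
    (g.strict i (Function.update a i x) (Function.update a i x') ∨
      g.strict i (Function.update a i x') (Function.update a i x))

/-- Extend a profile of the agents in `S` to a profile of `g` by fixing every agent
`j ∉ S` to the action `a j`. -/
def Game.extend (g : Game n m) (S : Finset (Fin n)) (a : g.Prof)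
    (b : (j : S) → g.A j.1) : g.Prof :=
  fun j => if h : j.1 ∈ S then b ⟨j.1, h⟩ else a j

/-- The reduced game `g^{S,a}`: agents in `S` play the residual game obtained from
`g` by fixing each agent `j ∈ N ∖ S` to the action `a j`. -/
def Game.sub (g : Game n m) (S : Finset (Fin n)) (hne : S.Nonempty) (hS : S ⊆ g.N)
    (a : g.Prof) : Game n m where
  N := S
  Nne := hne
  A := g.A
  Atwo := fun i hi => g.Atwo i (hS hi)
  pref := fun i b b' => g.pref ⟨i.1, hS i.2⟩ (g.extend S a b) (g.extend S a b')
  total := fun i b b' => g.total ⟨i.1, hS i.2⟩ _ _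
  trans := fun i b b' b'' h h' => g.trans ⟨i.1, hS i.2⟩ _ _ _ h h'

/-- The restriction `a_S` of a profile `a` of `g` to the agents in `S`. -/
def Game.restrict (g : Game n m) (S : Finset (Fin n)) (hS : S ⊆ g.N) (a : g.Prof) :
    (j : S) → g.A j.1 :=
  fun j => a ⟨j.1, hS j.2⟩

/-- The set of `(k,…,k)`-satisficing equilibria of `g`. -/
def SAT (k : ℕ) (g : Game n m) : Set g.Prof := {a | ∀ i : g.N, g.rank i a ≤ k}

/-- One-person `k`-satisficing behavior: in every single-agent game (in `Γ_{n,m}`,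
i.e. with strict unilateral deviations), the solution is the set of profiles at
which the agent is `k`-satisficed. -/
def OnePersonSat (k : ℕ) (φ : (g : Game n m) → Set g.Prof) : Prop :=
  ∀ g : Game n m, g.StrictUD → g.N.card = 1 →
    φ g = {a : g.Prof | ∀ i : g.N, g.rank i a ≤ k}

/-- Consistency: if `a` is in the solution of `g`, then for every nonempty proper
subset `S` of the agents, `a_S` is in the solution of `g^{S,a}`. -/
def Consistent (φ : (g : Game n m) → Set g.Prof) : Prop :=
  ∀ g : Game n m, g.StrictUD → ∀ a ∈ φ g,
    ∀ (S : Finset (Fin n)) (hne : S.Nonempty) (hS : S ⊆ g.N), S ≠ g.N →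
      g.restrict S hS a ∈ φ (g.sub S hne hS a)

/-- Converse consistency: if (in a game with at least two agents) `a_S` is in the
solution of `g^{S,a}` for every nonempty proper subset `S` of the agents, then `a`
is in the solution of `g`. -/
def ConvConsistent (φ : (g : Game n m) → Set g.Prof) : Prop :=
  ∀ g : Game n m, g.StrictUD → 2 ≤ g.N.card → ∀ a : g.Prof,
    (∀ (S : Finset (Fin n)) (hne : S.Nonempty) (hS : S ⊆ g.N), S ≠ g.N →
      g.restrict S hS a ∈ φ (g.sub S hne hS a)) → a ∈ φ g

lemma extend_restrict (g : Game n m) (S : Finset (Fin n)) (hS : S ⊆ g.N) (a : g.Prof) :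
    g.extend S a (g.restrict S hS a) = a := by
  funext j
  unfold Game.extend Game.restrict
  split <;> rfl

lemma extend_update (g : Game n m) (S : Finset (Fin n)) (hS : S ⊆ g.N) (a : g.Prof)
    (b : (j : S) → g.A j.1) (i : S) (x : g.A i.1) :
    g.extend S a (Function.update b i x) =
      Function.update (g.extend S a b) ⟨i.1, hS i.2⟩ x := by
  funext j
  by_cases hj : j = ⟨i.1, hS i.2⟩
  · subst hj
    rw [Function.update_self]
    unfold Game.extend
    rw [dif_pos i.2]
    exact Function.update_self i x b
  · rw [Function.update_of_ne hj]
    unfold Game.extend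
    split
    · rename_i h
      rw [Function.update_of_ne]
      intro he
      exact hj (Subtype.ext (congrArg Subtype.val he : j.1 = i.1))
    · rfl

lemma rank_sub (g : Game n m) (S : Finset (Fin n)) (hne : S.Nonempty) (hS : S ⊆ g.N)
    (a : g.Prof) (i : S) :
    (g.sub S hne hS a).rank i (g.restrict S hS a) = g.rank ⟨i.1, hS i.2⟩ a := by
  unfold Game.rank
  congr 1
  apply Nat.card_congr
  apply Equiv.subtypeEquivRight
  intro x
  show g.strict ⟨i.1, hS i.2⟩ (g.extend S a (Function.update (g.restrict S hS a) i x))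
        (g.extend S a (g.restrict S hS a)) ↔ _
  erw [extend_update, extend_restrict]

lemma strictUD_sub (g : Game n m) (hg : g.StrictUD) (S : Finset (Fin n)) (hne : S.Nonempty)
    (hS : S ⊆ g.N) (a : g.Prof) : (g.sub S hne hS a).StrictUD := by
  intro i b x x' hxx
  have h := hg ⟨i.1, hS i.2⟩ (g.extend S a b) x x' hxx
  rcases h with h | h
  · left
    show g.strict ⟨i.1, hS i.2⟩ (g.extend S a (Function.update b i x))
          (g.extend S a (Function.update b i x'))
    erw [extend_update, extend_update]; exact h
  · right
    show g.strict ⟨i.1, hS i.2⟩ (g.extend S a (Function.update b i x'))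
          (g.extend S a (Function.update b i x))
    erw [extend_update, extend_update]; exact h

/-- a solution `φ` on `Γ_{n,m}` satisfies one-person `k`-satisficing
behavior, consistency, and converse consistency iff `φ(g)` is the set of
`(k,…,k)`-satisficing equilibria of `g` for every `g ∈ Γ_{n,m}`. -/
theorem stmt5 (hn : 1 ≤ n) (hm : 2 ≤ m) (k : ℕ) (hk : 1 ≤ k)
    (φ : (g : Game n m) → Set g.Prof) :
    (OnePersonSat k φ ∧ Consistent φ ∧ ConvConsistent φ) ↔
      ∀ g : Game n m, g.StrictUD → φ g = SAT k g := by
  constructor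
  · rintro ⟨h1, h2, h3⟩
    suffices H : ∀ c (g : Game n m), g.StrictUD → g.N.card ≤ c → φ g = SAT k g by
      intro g hg; exact H g.N.card g hg le_rfl
    intro c
    induction c with
    | zero =>
      intro g hg hc
      exact absurd (Finset.card_pos.mpr g.Nne) (by omega)
    | succ c ihc =>
      intro g hg hc
      by_cases hone : g.N.card = 1
      · rw [h1 g hg hone]; rfl
      · have h2c : 2 ≤ g.N.card := by
          have := Finset.card_pos.mpr g.Nne; omega
        apply Set.Subset.antisymm
        · intro a ha i
          have hSsub : {i.1} ⊆ g.N := Finset.singleton_subset_iff.mpr i.2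
          have hSN : ({i.1} : Finset (Fin n)) ≠ g.N := by
            intro h
            rw [← h] at h2c
            simp at h2c
          have hr := h2 g hg a ha {i.1} (Finset.singleton_nonempty _) hSsub hSN
          rw [h1 _ (strictUD_sub g hg _ _ _ _) (Finset.card_singleton _)] at hr
          have hj := hr ⟨i.1, Finset.mem_singleton_self _⟩
          erw [rank_sub] at hj
          exact hj
        · intro a ha
          apply h3 g hg h2c a
          intro S hne hS hSN
          have hlt : S.card < g.N.card := Finset.card_lt_card (hS.ssubset_of_ne hSN)
          rw [ihc _ (strictUD_sub g hg S hne hS a)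
            (show (g.sub S hne hS a).N.card ≤ c from Nat.le_of_lt_succ (by
              show S.card < c + 1; omega))]
          intro j
          erw [rank_sub]
          exact ha ⟨j.1, hS j.2⟩
  · intro hφ
    refine ⟨?_, ?_, ?_⟩
    · intro g hg _
      rw [hφ g hg]; rfl
    · intro g hg a ha S hne hS hSN
      rw [hφ g hg] at ha
      rw [hφ _ (strictUD_sub g hg S hne hS a)]
      intro j
      erw [rank_sub]
      exact ha ⟨j.1, hS j.2⟩
    · intro g hg h2c a hA
      rw [hφ g hg]
      intro i
      have hSsub : {i.1} ⊆ g.N := Finset.singleton_subset_iff.mpr i.2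
      have hSN : ({i.1} : Finset (Fin n)) ≠ g.N := by
        intro h
        rw [← h] at h2c
        simp at h2c
      have hr := hA {i.1} (Finset.singleton_nonempty _) hSsub hSN
      rw [hφ _ (strictUD_sub g hg _ _ _ _)] at hr
      have hj := hr ⟨i.1, Finset.mem_singleton_self _⟩
      erw [rank_sub] at hj
      exact hj

end Solutions
end

section
/- Let G be a game drawn uniformly at random from G_{n,m}, and fix S ⊆ {1,…,n}, 0 ≤ d ≤ |S|, and an integer k ≥ 1. Then for every action profile a, E[χ_a] = ζ({1,…,n}, d, S, k) = (∏_{i=1}^n 1/m_i) · ψ(d,S,k), and consequently E[N(d,S,k)] = Σ_{a∈𝒜} E[χ_a] = ψ(d,S,k). -/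
open scoped Classical

namespace RandomGames

/-- Action profiles of a game with agent set `Fin n` and action sets `Fin (m i)`. -/
abbrev Profile (n : ℕ) (m : Fin n → ℕ) := (i : Fin n) → Fin (m i)

/-- A game in `G_{n,m}`: agent set `Fin n`, action sets `Fin (m i)`, and each
agent's preference relation a strict linear order (total, transitive,
antisymmetric) on the set of action profiles. -/
structure LinGame (n : ℕ) (m : Fin n → ℕ) where
  pref : Fin n → Profile n m → Profile n m → Prop
  total : ∀ i a b, pref i a b ∨ pref i b a
  trans : ∀ i a b c, pref i a b → pref i b c → pref i a c
  antisymm : ∀ i a b, pref i a b → pref i b a → a = b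

variable {n : ℕ} {m : Fin n → ℕ}

/-- Strict part `≻_i` of agent `i`'s preference relation. -/
def LinGame.strict (g : LinGame n m) (i : Fin n) (a b : Profile n m) : Prop :=
  g.pref i a b ∧ ¬ g.pref i b a

/-- `rank_i(a | ⪰_i) = 1 + |{x ∈ A_i : (x, a_{-i}) ≻_i (a_i, a_{-i})}|`. -/
noncomputable def LinGame.rank (g : LinGame n m) (i : Fin n) (a : Profile n m) : ℕ :=
  1 + Nat.card {x : Fin (m i) // g.strict i (Function.update a i x) a}

/-- The profile-condition `Q(d,S,k)` holds at `a`: the set `D` of agents that are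
not 1-satisficed at `a` satisfies `D ⊆ S`, `|D| ≤ d`, and every agent in `D` is
`k`-satisficed at `a`. -/
def Qcond (g : LinGame n m) (d : ℕ) (S : Finset (Fin n)) (k : ℕ)
    (a : Profile n m) : Prop :=
  (∀ i : Fin n, g.rank i a ≠ 1 → i ∈ S ∧ g.rank i a ≤ k) ∧
    Nat.card {i : Fin n // g.rank i a ≠ 1} ≤ d

/-- Property `P^z(d,S,k)`: `Q(d,S,k)` holds at at least `z` action profiles. -/
def Pz (z d : ℕ) (S : Finset (Fin n)) (k : ℕ) (g : LinGame n m) : Prop :=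
  z ≤ Nat.card {a : Profile n m // Qcond g d S k a}

/-- `γ_{n,m}(P)`: the fraction of games in `G_{n,m}` satisfying `P`. -/
noncomputable def gamma (n : ℕ) (m : Fin n → ℕ) (P : LinGame n m → Prop) : ℝ :=
  (Nat.card {g : LinGame n m // P g} : ℝ) / (Nat.card (LinGame n m) : ℝ)

/-- `ψ(d,S,k) = Σ_{T ⊆ S, |T| ≤ d} ∏_{i∈T} (min{k, m_i} − 1)`. -/
def psi (m : Fin n → ℕ) (d : ℕ) (S : Finset (Fin n)) (k : ℕ) : ℕ :=
  ∑ T ∈ S.powerset.filter (fun T => T.card ≤ d), ∏ i ∈ T, (min k (m i) - 1)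

/-- `δ_{n,m} = (∏_i m_i) / max_i m_i`. -/
noncomputable def deltanm (n : ℕ) (m : Fin n → ℕ) : ℝ :=
  (∏ i, (m i : ℝ)) / ((Finset.univ.sup m : ℕ) : ℝ)

/-- `Pr[Poisson(λ) ≥ z]`, the upper tail of a Poisson distribution with mean `λ`. -/
noncomputable def poissonTail (lam : ℝ) (z : ℕ) : ℝ :=
  ∑' j : ℕ, if z ≤ j then Real.exp (-lam) * lam ^ j / (Nat.factorial j) else 0

/-- `E[χ_a]`, the probability that `Q(d,S,k)` holds at `a` in a game drawn
uniformly at random from `G_{n,m}`. -/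
noncomputable def Echi (n : ℕ) (m : Fin n → ℕ) (d : ℕ) (S : Finset (Fin n)) (k : ℕ)
    (a : Profile n m) : ℝ :=
  (Nat.card {g : LinGame n m // Qcond g d S k a} : ℝ) / (Nat.card (LinGame n m) : ℝ)

/-- `E[χ_a · χ_{a'}]`, the probability that `Q(d,S,k)` holds at both `a` and `a'`
in a game drawn uniformly at random from `G_{n,m}`. -/
noncomputable def Echi2 (n : ℕ) (m : Fin n → ℕ) (d : ℕ) (S : Finset (Fin n)) (k : ℕ)
    (a a' : Profile n m) : ℝ :=
  (Nat.card {g : LinGame n m // Qcond g d S k a ∧ Qcond g d S k a'} : ℝ) /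
    (Nat.card (LinGame n m) : ℝ)

/-- `a' ∈ L_a`: the profiles `a` and `a'` lie on a common line (they differ in at
most one coordinate). -/
def sameLine (a a' : Profile n m) : Prop :=
  ∃ i : Fin n, ∀ j : Fin n, j ≠ i → a' j = a j

/-- `c_1(d,S,k) = Σ_{a} Σ_{a' ∈ L_a} E[χ_a]·E[χ_{a'}]`. -/
noncomputable def c1 (n : ℕ) (m : Fin n → ℕ) (d : ℕ) (S : Finset (Fin n)) (k : ℕ) : ℝ :=
  ∑ a : Profile n m, ∑ a' : Profile n m,
    if sameLine a a' then Echi n m d S k a * Echi n m d S k a' else 0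

/-- `c_2(d,S,k) = Σ_{a} Σ_{a' ∈ L_a ∖ {a}} E[χ_a · χ_{a'}]`. -/
noncomputable def c2 (n : ℕ) (m : Fin n → ℕ) (d : ℕ) (S : Finset (Fin n)) (k : ℕ) : ℝ :=
  ∑ a : Profile n m, ∑ a' : Profile n m,
    if sameLine a a' ∧ a ≠ a' then Echi2 n m d S k a a' else 0

/- ===== auxiliary development ===== -/

lemma nat_card_subtype {α : Type*} [Fintype α] (p : α → Prop) :
    Nat.card {x // p x} = (Finset.univ.filter p).card := by
  classical
  simp [Nat.card_eq_fintype_card, Fintype.card_subtype]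

/-- Total orders on `Y`. -/
abbrev TO (Y : Type*) : Type _ :=
  {r : Y → Y → Prop // (∀ a b, r a b ∨ r b a) ∧ (∀ a b c, r a b → r b c → r a c) ∧
    (∀ a b, r a b → r b a → a = b)}

section TOsec
variable {Y : Type*} [Fintype Y]

noncomputable instance : Fintype (TO Y) := Fintype.ofFinite _

lemma TO.nonempty : Nonempty (TO Y) := by
  let e := Fintype.equivFin Y
  exact ⟨⟨fun a b => e a ≤ e b, fun a b => le_total _ _,
    fun a b c h1 h2 => le_trans h1 h2, fun a b h1 h2 => e.injective (le_antisymm h1 h2)⟩⟩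

def TO.lt (r : TO Y) (a b : Y) : Prop := r.1 a b ∧ ¬ r.1 b a

omit [Fintype Y] in
lemma TO.lt_irrefl (r : TO Y) (a : Y) : ¬ r.lt a a := fun h => h.2 h.1

omit [Fintype Y] in
lemma TO.lt_trans' (r : TO Y) {a b c : Y} (h1 : r.lt a b) (h2 : r.lt b c) : r.lt a c :=
  ⟨r.2.2.1 _ _ _ h1.1 h2.1, fun h => h1.2 (r.2.2.1 _ _ _ h2.1 h)⟩

omit [Fintype Y] in
lemma TO.lt_total (r : TO Y) {a b : Y} (h : a ≠ b) : r.lt a b ∨ r.lt b a := by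
  rcases r.2.1 a b with h1 | h1
  · by_cases h2 : r.1 b a
    · exact absurd (r.2.2.2 _ _ h1 h2) h
    · exact Or.inl ⟨h1, h2⟩
  · by_cases h2 : r.1 a b
    · exact absurd (r.2.2.2 _ _ h2 h1) h
    · exact Or.inr ⟨h1, h2⟩

variable {ι : Type*} [Fintype ι] {u : ι → Y}

/-- Number of points on the "line" `u` strictly better than `u x`. -/
noncomputable def cA (r : TO Y) (u : ι → Y) (x : ι) : ℕ :=
  (Finset.univ.filter (fun y => r.lt (u y) (u x))).card

lemma cA_lt (r : TO Y) (x : ι) : cA r u x < Fintype.card ι := by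
  have hsub : Finset.univ.filter (fun y => r.lt (u y) (u x)) ⊆ Finset.univ.erase x := by
    intro y hy
    simp only [Finset.mem_filter] at hy
    refine Finset.mem_erase.mpr ⟨?_, Finset.mem_univ _⟩
    rintro rfl; exact r.lt_irrefl _ hy.2
  calc cA r u x ≤ (Finset.univ.erase x).card := Finset.card_le_card hsub
    _ < Finset.univ.card := Finset.card_erase_lt_of_mem (Finset.mem_univ x)
    _ = Fintype.card ι := Finset.card_univ

lemma cA_strict_mono (r : TO Y) {x y : ι}
    (h : r.lt (u y) (u x)) : cA r u y < cA r u x := by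
  apply Finset.card_lt_card
  rw [Finset.ssubset_iff_of_subset]
  · exact ⟨y, by simp [cA, h], by simp [r.lt_irrefl]⟩
  · intro z hz
    simp only [Finset.mem_filter, Finset.mem_univ, true_and] at hz ⊢
    exact r.lt_trans' hz h

lemma cA_injective (r : TO Y) (hu : Function.Injective u) :
    Function.Injective (cA r u) := by
  intro x y hxy
  by_contra hne
  rcases r.lt_total (fun h => hne (hu h)) with h | h
  · exact absurd hxy (Nat.ne_of_gt (cA_strict_mono r h)).symm
  · exact absurd hxy (Nat.ne_of_gt (cA_strict_mono r h))

lemma cA_exists (r : TO Y) (hu : Function.Injective u) {t : ℕ} (ht : t < Fintype.card ι) :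
    ∃ x, cA r u x = t := by
  have : Function.Bijective (fun x => (⟨cA r u x, cA_lt r x⟩ : Fin (Fintype.card ι))) := by
    refine (Fintype.bijective_iff_injective_and_card _).mpr ⟨?_, by simp⟩
    intro x y h
    exact cA_injective r hu (by simpa [Fin.ext_iff] using h)
  obtain ⟨x, hx⟩ := this.2 ⟨t, ht⟩
  exact ⟨x, by simpa [Fin.ext_iff] using hx⟩

omit [Fintype Y] in
def TO.relabel (r : TO Y) (σ : Y ≃ Y) : TO Y :=
  ⟨fun p q => r.1 (σ p) (σ q), fun a b => r.2.1 _ _,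
    fun a b c h1 h2 => r.2.2.1 _ _ _ h1 h2,
    fun a b h1 h2 => σ.injective (r.2.2.2 _ _ h1 h2)⟩

omit [Fintype Y] in
lemma TO.relabel_swap_swap [DecidableEq Y] (r : TO Y) (p q : Y) :
    (r.relabel (Equiv.swap p q)).relabel (Equiv.swap p q) = r := by
  apply Subtype.ext
  funext a b
  simp [TO.relabel, Equiv.swap_apply_self]

lemma cA_relabel_swap (r : TO Y) (hu : Function.Injective u) (x x' : ι) :
    cA (r.relabel (Equiv.swap (u x) (u x'))) u x = cA r u x' := by
  classical
  have key : ∀ y : ι, (Equiv.swap (u x) (u x')) (u y) = u ((Equiv.swap x x') y) := by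
    intro y
    by_cases h1 : y = x
    · subst h1; simp
    · by_cases h2 : y = x'
      · subst h2; simp
      · rw [Equiv.swap_apply_of_ne_of_ne (fun h => h1 (hu h)) (fun h => h2 (hu h)),
          Equiv.swap_apply_of_ne_of_ne h1 h2]
  unfold cA
  have hlt : ∀ y, (r.relabel (Equiv.swap (u x) (u x'))).lt (u y) (u x)
      ↔ r.lt (u ((Equiv.swap x x') y)) (u x') := by
    intro y
    simp only [TO.lt, TO.relabel, key, Equiv.swap_apply_left]
  rw [Finset.filter_congr (fun y _ => by rw [hlt y])]
  apply Finset.card_bij (fun y _ => (Equiv.swap x x') y)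
  · intro y hy; simp only [Finset.mem_filter, Finset.mem_univ, true_and] at hy ⊢
    exact hy
  · intro y₁ _ y₂ _ h; exact (Equiv.swap x x').injective h
  · intro y hy
    refine ⟨(Equiv.swap x x') y, ?_, by simp⟩
    simp only [Finset.mem_filter, Finset.mem_univ, true_and] at hy ⊢
    simpa using hy

lemma fiber_card_eq (hu : Function.Injective u) (t : ℕ) (x x' : ι) :
    (Finset.univ.filter (fun r : TO Y => cA r u x = t)).card
      = (Finset.univ.filter (fun r : TO Y => cA r u x' = t)).card := by
  classical
  apply Finset.card_bij' (fun r _ => r.relabel (Equiv.swap (u x) (u x')))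
    (fun r _ => r.relabel (Equiv.swap (u x) (u x')))
  · intro r _; exact TO.relabel_swap_swap r _ _
  · intro r _; exact TO.relabel_swap_swap r _ _
  · intro r hr
    simp only [Finset.mem_filter, Finset.mem_univ, true_and] at hr ⊢
    rw [show Equiv.swap (u x) (u x') = Equiv.swap (u x') (u x) from Equiv.swap_comm _ _,
      cA_relabel_swap r hu x' x]
    exact hr
  · intro r hr
    simp only [Finset.mem_filter, Finset.mem_univ, true_and] at hr ⊢
    rw [cA_relabel_swap r hu x x']
    exact hr

lemma count_fiber (hu : Function.Injective u) (x0 : ι) {t : ℕ} (ht : t < Fintype.card ι) :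
    Fintype.card ι * (Finset.univ.filter (fun r : TO Y => cA r u x0 = t)).card
      = Fintype.card (TO Y) := by
  have h1 : ∀ r : TO Y, (Finset.univ.filter (fun x : ι => cA r u x = t)).card = 1 := by
    intro r
    obtain ⟨x, hx⟩ := cA_exists r hu ht
    rw [Finset.card_eq_one]
    exact ⟨x, Finset.eq_singleton_iff_unique_mem.mpr
      ⟨by simp [hx], fun y hy => cA_injective r hu (by
        simp only [Finset.mem_filter, Finset.mem_univ, true_and] at hy
        rw [hy, hx])⟩⟩
  have h2 : ∑ x : ι, (Finset.univ.filter (fun r : TO Y => cA r u x = t)).card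
      = Fintype.card (TO Y) := by
    simp only [Finset.card_filter]
    rw [Finset.sum_comm]
    have hone : ∀ r : TO Y, (∑ x : ι, if cA r u x = t then 1 else 0) = 1 := by
      intro r
      rw [← Finset.card_filter]
      exact h1 r
    rw [Finset.sum_congr rfl (fun r _ => hone r), ← Finset.card_univ, Finset.card_eq_sum_ones]
  calc Fintype.card ι * (Finset.univ.filter (fun r : TO Y => cA r u x0 = t)).card
      = ∑ _x : ι, (Finset.univ.filter (fun r : TO Y => cA r u x0 = t)).card := by
        rw [Finset.sum_const, Finset.card_univ, smul_eq_mul]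
    _ = ∑ x : ι, (Finset.univ.filter (fun r : TO Y => cA r u x = t)).card :=
        Finset.sum_congr rfl (fun x _ => fiber_card_eq hu t x0 x)
    _ = Fintype.card (TO Y) := h2

end TOsec

/- ===== specialization to games ===== -/

def gameEquiv (n : ℕ) (m : Fin n → ℕ) : LinGame n m ≃ (Fin n → TO (Profile n m)) where
  toFun g i := ⟨g.pref i, g.total i, g.trans i, g.antisymm i⟩
  invFun h := ⟨fun i => (h i).1, fun i => (h i).2.1, fun i => (h i).2.2.1, fun i => (h i).2.2.2⟩
  left_inv g := rfl
  right_inv h := rfl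

noncomputable instance : Fintype (LinGame n m) :=
  Fintype.ofEquiv _ (gameEquiv n m).symm

lemma update_inj (a : Profile n m) (i : Fin n) :
    Function.Injective (fun x : Fin (m i) => Function.update a i x) := by
  intro x y h
  simpa using congrFun h i

lemma rank_eq (g : LinGame n m) (i : Fin n) (a : Profile n m) :
    g.rank i a = 1 + cA (gameEquiv n m g i) (fun x => Function.update a i x) (a i) := by
  unfold LinGame.rank cA
  rw [nat_card_subtype]
  have hset : (Finset.univ.filter (fun x : Fin (m i) => g.strict i (Function.update a i x) a))
      = Finset.univ.filter (fun y : Fin (m i) =>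
          ((gameEquiv n m) g i).lt (Function.update a i y) (Function.update a i (a i))) := by
    ext x
    rw [Finset.mem_filter, Finset.mem_filter]
    simp [TO.lt, gameEquiv, LinGame.strict, Function.update_eq_self]
  rw [hset]

def Vpred (S : Finset (Fin n)) (d k : ℕ) (v : Fin n → ℕ) : Prop :=
  (∀ i, v i ≠ 0 → i ∈ S ∧ v i < k) ∧ (Finset.univ.filter (fun i => v i ≠ 0)).card ≤ d

lemma Qcond_iff (g : LinGame n m) (d : ℕ) (S : Finset (Fin n)) (k : ℕ) (a : Profile n m) :
    Qcond g d S k a ↔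
      Vpred S d k (fun i => cA (gameEquiv n m g i) (fun x => Function.update a i x) (a i)) := by
  unfold Qcond Vpred
  rw [nat_card_subtype]
  have h1 : ∀ c : ℕ, 1 + c ≠ 1 ↔ c ≠ 0 := fun c => by omega
  have h2 : ∀ c : ℕ, 1 + c ≤ k ↔ c < k := fun c => by omega
  simp only [rank_eq, h1, h2]

lemma card_linGame :
    Nat.card (LinGame n m) = Fintype.card (TO (Profile n m)) ^ n := by
  rw [Nat.card_congr (gameEquiv n m), Nat.card_pi]
  simp [Nat.card_eq_fintype_card, Finset.prod_const]

/-- The vector of `cA` statistics of a tuple of total orders at profile `a`. -/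
noncomputable def vecOf (a : Profile n m) (h : Fin n → TO (Profile n m)) (i : Fin n) : ℕ :=
  cA (h i) (fun x => Function.update a i x) (a i)

/-- The finset of admissible rank-vectors. -/
noncomputable def Vset (m : Fin n → ℕ) (S : Finset (Fin n)) (d k : ℕ) : Finset (Fin n → ℕ) :=
  (Fintype.piFinset fun i => Finset.range (m i)).filter (Vpred S d k)

set_option maxHeartbeats 1000000 in
lemma count_Qcond (a : Profile n m) (d : ℕ) (S : Finset (Fin n)) (k : ℕ) :
    Nat.card {g : LinGame n m // Qcond g d S k a} * ∏ i, m i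
      = (Vset m S d k).card * Fintype.card (TO (Profile n m)) ^ n := by
  classical
  have hcA_lt : ∀ (h : Fin n → TO (Profile n m)) (i : Fin n), vecOf a h i < m i := by
    intro h i
    simpa [vecOf] using cA_lt (h i) (u := fun x => Function.update a i x) (a i)
  -- step a
  have ha : Nat.card {g : LinGame n m // Qcond g d S k a}
      = (Finset.univ.filter
          (fun h : Fin n → TO (Profile n m) => Vpred S d k (vecOf a h))).card := by
    rw [Nat.card_congr (Equiv.subtypeEquiv (gameEquiv n m)
      (q := fun h => Vpred S d k (vecOf a h)) (fun g => Qcond_iff g d S k a)),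
      nat_card_subtype]
  -- step b
  have hb : (Finset.univ.filter
        (fun h : Fin n → TO (Profile n m) => Vpred S d k (vecOf a h))).card
      = ∑ v ∈ Vset m S d k, (Finset.univ.filter
          (fun h : Fin n → TO (Profile n m) => vecOf a h = v)).card := by
    rw [Finset.card_eq_sum_card_fiberwise (f := vecOf a) (t := Vset m S d k)]
    · apply Finset.sum_congr rfl
      intro v hv
      congr 1
      rw [Finset.filter_filter]
      apply Finset.filter_congr
      intro h _
      constructor
      · exact fun hh => hh.2
      · intro hh
        refine ⟨?_, hh⟩
        rw [Vset, Finset.mem_filter] at hv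
        rw [hh]; exact hv.2
    · intro h hh
      simp only [Finset.mem_coe, Finset.mem_filter, Finset.mem_univ, true_and] at hh ⊢
      rw [Vset, Finset.mem_filter]
      refine ⟨?_, hh⟩
      rw [Fintype.mem_piFinset]
      intro i
      rw [Finset.mem_range]
      exact hcA_lt h i
  -- step c
  have hc : ∀ v : Fin n → ℕ,
      (Finset.univ.filter (fun h : Fin n → TO (Profile n m) => vecOf a h = v)).card
      = ∏ i, (Finset.univ.filter
          (fun r : TO (Profile n m) =>
            cA r (fun x => Function.update a i x) (a i) = v i)).card := by
    intro v
    rw [← Fintype.card_subtype]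
    have e1 : {h : Fin n → TO (Profile n m) // vecOf a h = v}
        ≃ {h : Fin n → TO (Profile n m) //
            ∀ i, cA (h i) (fun x => Function.update a i x) (a i) = v i} :=
      Equiv.subtypeEquivRight (fun h => funext_iff)
    have e2 : {h : Fin n → TO (Profile n m) //
          ∀ i, cA (h i) (fun x => Function.update a i x) (a i) = v i}
        ≃ ∀ i : Fin n, {r : TO (Profile n m) //
            cA r (fun x => Function.update a i x) (a i) = v i} :=
      Equiv.subtypePiEquivPi
        (p := fun (i : Fin n) (r : TO (Profile n m)) =>
          cA r (fun x => Function.update a i x) (a i) = v i)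
    rw [Fintype.card_congr (e1.trans e2), Fintype.card_pi]
    apply Finset.prod_congr rfl
    intro i _
    rw [Fintype.card_subtype]
  -- step d: multiply
  rw [ha, hb, Finset.sum_mul]
  have hd : ∀ v ∈ Vset m S d k,
      (Finset.univ.filter
        (fun h : Fin n → TO (Profile n m) => vecOf a h = v)).card * ∏ i, m i
      = Fintype.card (TO (Profile n m)) ^ n := by
    intro v hv
    rw [hc, ← Finset.prod_mul_distrib]
    have hfib : ∀ i : Fin n, (Finset.univ.filter
        (fun r : TO (Profile n m) =>
          cA r (fun x => Function.update a i x) (a i) = v i)).card * m i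
        = Fintype.card (TO (Profile n m)) := by
      intro i
      have hvi : v i < m i := by
        rw [Vset, Finset.mem_filter, Fintype.mem_piFinset] at hv
        simpa using hv.1 i
      have := count_fiber (u := fun x : Fin (m i) => Function.update a i x)
        (update_inj a i) (a i) (t := v i) (by simpa using hvi)
      simpa [mul_comm] using this
    rw [Finset.prod_congr rfl (fun i _ => hfib i), Finset.prod_const, Finset.card_univ,
      Fintype.card_fin]
  rw [Finset.sum_congr rfl hd, Finset.sum_const, smul_eq_mul]

set_option maxHeartbeats 1000000 in
lemma Vcard_eq (hm : ∀ i, 2 ≤ m i) (S : Finset (Fin n)) (d k : ℕ) (hk : 1 ≤ k) :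
    (Vset m S d k).card = psi m d S k := by
  classical
  rw [Vset, Finset.card_eq_sum_card_fiberwise
    (f := fun v => Finset.univ.filter (fun i => v i ≠ 0))
    (t := S.powerset.filter (fun T => T.card ≤ d))]
  · unfold psi
    apply Finset.sum_congr rfl
    intro T hT
    rw [Finset.mem_filter, Finset.mem_powerset] at hT
    have hfib : ((Fintype.piFinset fun i => Finset.range (m i)).filter
          (Vpred S d k)).filter (fun v => Finset.univ.filter (fun i => v i ≠ 0) = T)
        = Fintype.piFinset (fun i =>
            if i ∈ T then (Finset.range (min k (m i))).erase 0 else {0}) := by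
      ext v
      simp only [Finset.mem_filter, Fintype.mem_piFinset, Finset.mem_range]
      constructor
      · rintro ⟨⟨hlt, hP, _⟩, hsupp⟩
        intro i
        by_cases hi : i ∈ T
        · simp only [hi, if_true, Finset.mem_erase, Finset.mem_range]
          have hvi : v i ≠ 0 := by
            have := hsupp ▸ hi
            simpa using (Finset.mem_filter.mp this).2
          exact ⟨hvi, lt_min ((hP i hvi).2) (hlt i)⟩
        · simp only [hi, if_false, Finset.mem_singleton]
          by_contra hvi
          exact hi (hsupp ▸ (by simp [hvi] : i ∈ Finset.univ.filter (fun i => v i ≠ 0)))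
      · intro hv
        have hmem : ∀ i, if i ∈ T then (v i ≠ 0 ∧ v i < min k (m i)) else v i = 0 := by
          intro i
          have := hv i
          by_cases hi : i ∈ T <;> simp only [hi, if_true, if_false] at this ⊢
          · simpa [Finset.mem_erase, Finset.mem_range] using this
          · simpa using this
        have hiT : ∀ i, v i ≠ 0 ↔ i ∈ T := by
          intro i
          by_cases hi : i ∈ T
          · have := hmem i; rw [if_pos hi] at this; simp [hi, this.1]
          · have := hmem i; rw [if_neg hi] at this; simp [hi, this]
        have hsupp : Finset.univ.filter (fun i => v i ≠ 0) = T := by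
          ext i; simp [hiT i]
        refine ⟨⟨?_, ?_, ?_⟩, hsupp⟩
        · intro i
          by_cases hi : i ∈ T
          · have := hmem i; rw [if_pos hi] at this
            exact lt_of_lt_of_le this.2 (min_le_right _ _)
          · have := hmem i; rw [if_neg hi] at this
            rw [this]
            have := hm i; omega
        · intro i hvi
          have hi : i ∈ T := (hiT i).mp hvi
          have := hmem i; rw [if_pos hi] at this
          exact ⟨hT.1 hi, lt_of_lt_of_le this.2 (min_le_left _ _)⟩
        · rw [hsupp]; exact hT.2
    rw [hfib, Fintype.card_piFinset]
    have hcardif : ∀ i : Fin n,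
        ((if i ∈ T then (Finset.range (min k (m i))).erase 0 else {0}) : Finset ℕ).card
        = if i ∈ T then min k (m i) - 1 else 1 := by
      intro i
      by_cases hi : i ∈ T
      · rw [if_pos hi, if_pos hi, Finset.card_erase_of_mem, Finset.card_range]
        rw [Finset.mem_range]
        have := hm i; omega
      · rw [if_neg hi, if_neg hi, Finset.card_singleton]
    calc ∏ i, ((if i ∈ T then (Finset.range (min k (m i))).erase 0 else {0}) : Finset ℕ).card
        = ∏ i, (if i ∈ T then min k (m i) - 1 else 1) :=
          Finset.prod_congr rfl (fun i _ => hcardif i)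
      _ = ∏ i ∈ Finset.univ.filter (· ∈ T), (min k (m i) - 1) :=
          (Finset.prod_filter _ _).symm
      _ = ∏ i ∈ T, (min k (m i) - 1) := by rw [Finset.filter_univ_mem]
  · intro v hv
    rw [Finset.mem_coe, Finset.mem_filter] at hv
    rw [Finset.mem_coe, Finset.mem_filter, Finset.mem_powerset]
    constructor
    · intro i hi
      simp only [Finset.mem_filter, Finset.mem_univ, true_and] at hi
      exact (hv.2.1 i hi).1
    · exact hv.2.2
lemma prod_one_div_eq (hm : ∀ i, 2 ≤ m i) :
    (∏ i, (1 : ℝ) / (m i : ℝ)) = (∏ i, (m i : ℝ))⁻¹ := by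
  rw [← Finset.prod_inv_distrib]
  simp [one_div]


/-- `E[χ_a] = ζ({1,…,n},d,S,k) = (∏_i 1/m_i)·ψ(d,S,k)` for every
profile `a`, and consequently `E[N(d,S,k)] = Σ_a E[χ_a] = ψ(d,S,k)`. -/
theorem stmt11 (n : ℕ) (hn : 1 ≤ n) (m : Fin n → ℕ) (hm : ∀ i, 2 ≤ m i)
    (S : Finset (Fin n)) (d : ℕ) (hd : d ≤ S.card) (k : ℕ) (hk : 1 ≤ k) :
    (∀ a : Profile n m,
      Echi n m d S k a = (∏ i, (1 : ℝ) / (m i : ℝ)) * (psi m d S k : ℝ)) ∧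
    (∑ a : Profile n m, Echi n m d S k a = (psi m d S k : ℝ)) := by
  classical
  have hCpos : 0 < Fintype.card (TO (Profile n m)) :=
    @Fintype.card_pos _ _ TO.nonempty
  have hmpos : ∀ i, (0:ℝ) < (m i : ℝ) := fun i => by
    have := hm i; positivity
  have hprod_pos : (0:ℝ) < ∏ i, (m i : ℝ) := Finset.prod_pos (fun i _ => hmpos i)
  have key : ∀ a : Profile n m,
      Echi n m d S k a = (∏ i, (1 : ℝ) / (m i : ℝ)) * (psi m d S k : ℝ) := by
    intro a
    have hnat := count_Qcond a d S k
    rw [Vcard_eq hm S d k hk] at hnat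
    have h2 : (Nat.card {g : LinGame n m // Qcond g d S k a} : ℝ)
        / ((Fintype.card (TO (Profile n m)) : ℝ) ^ n)
        = (psi m d S k : ℝ) / (∏ i, (m i : ℝ)) := by
      rw [div_eq_div_iff (by positivity) (by positivity)]
      exact_mod_cast hnat
    unfold Echi
    rw [card_linGame]
    push_cast
    rw [h2, prod_one_div_eq hm, inv_mul_eq_div]
  refine ⟨key, ?_⟩
  rw [Finset.sum_congr rfl (fun a _ => key a), Finset.sum_const, Finset.card_univ,
    nsmul_eq_mul]
  have hcard : (Fintype.card (Profile n m) : ℝ) = ∏ i, (m i : ℝ) := by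
    simp [Fintype.card_pi]
  rw [hcard, prod_one_div_eq hm, ← mul_assoc, mul_inv_cancel₀ (ne_of_gt hprod_pos), one_mul]


end RandomGames
end

section
/- In the traveler's dilemma with bound 100, the set of (2,2)-satisficing equilibria (profiles at which both agents are 2-satisficed) is exactly {(x,x) : x ∈ {2,3,…,100}} ∪ {(2,3), (3,2), (2,4), (4,2)}. -/
/-!
Statement 18: in the traveler's dilemma with bound 100, the set of
(2,2)-satisficing equilibria is exactly the diagonal together with
{(2,3), (3,2), (2,4), (4,2)}.
-/

namespace TravelersDilemma

/-- Monetary payoff of an agent playing `a` against an opponent playing `b`. -/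
def u (a b : ℕ) : ℤ :=
  if a = b then (a : ℤ) else if a < b then (a : ℤ) + 2 else (b : ℤ) - 2

/-- `rank_i((a,b) | ⪰_i) = 1 + |{x ∈ {2,…,100} : u(x,b) > u(a,b)}|`. -/
def rank (a b : ℕ) : ℕ :=
  1 + ((Finset.Icc 2 100).filter fun x => u a b < u x b).card

/-- An agent playing `a` against `b` is 2-satisficed. -/
def sat2 (a b : ℕ) : Prop := rank a b ≤ 2

/-- Characterization: against `b = 2` every reply is 2-satisficed; against `b = 3`
only replies `≤ 3` are; against `b ≥ 4` exactly the replies in `{b-2, b-1, b}` are. -/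
lemma sat2_iff {a b : ℕ} (ha : 2 ≤ a) (ha' : a ≤ 100) (hb : 2 ≤ b) (hb' : b ≤ 100) :
    sat2 a b ↔ (b = 2 ∨ (b = 3 ∧ a ≤ 3) ∨ (4 ≤ b ∧ b - 2 ≤ a ∧ a ≤ b)) := by
  unfold sat2 rank
  have hcard : ∀ c : ℕ, 1 + c ≤ 2 ↔ c ≤ 1 := by omega
  rw [hcard]
  constructor
  · intro h
    by_contra hc
    push_neg at hc
    have h2 : 2 ≤ ((Finset.Icc 2 100).filter fun x => u a b < u x b).card := by
      apply Finset.one_lt_card.mpr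
      refine ⟨b - 1, ?_, b, ?_, by omega⟩ <;>
      · rw [Finset.mem_filter]; simp only [Finset.mem_Icc, u]
        split_ifs <;> constructor <;> try constructor
        all_goals omega
    omega
  · intro h
    by_cases hb2 : b = 2
    · subst hb2
      calc ((Finset.Icc 2 100).filter fun x => u a 2 < u x 2).card
          ≤ ({2} : Finset ℕ).card := by
            apply Finset.card_le_card
            intro x hx
            rw [Finset.mem_filter] at hx; simp only [Finset.mem_Icc, u] at hx
            simp only [Finset.mem_singleton]
            split_ifs at hx <;> omega
        _ = 1 := rfl
    · calc ((Finset.Icc 2 100).filter fun x => u a b < u x b).card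
          ≤ ({b - 1} : Finset ℕ).card := by
            apply Finset.card_le_card
            intro x hx
            rw [Finset.mem_filter] at hx; simp only [Finset.mem_Icc, u] at hx
            simp only [Finset.mem_singleton]
            split_ifs at hx <;> omega
        _ = 1 := rfl

theorem stmt18 :
    ∀ a ∈ Finset.Icc 2 100, ∀ b ∈ Finset.Icc 2 100,
      ((sat2 a b ∧ sat2 b a) ↔
        (a = b ∨ (a = 2 ∧ b = 3) ∨ (a = 3 ∧ b = 2) ∨ (a = 2 ∧ b = 4) ∨ (a = 4 ∧ b = 2))) := by
  intro a ha b hb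
  simp only [Finset.mem_Icc] at ha hb
  rw [sat2_iff ha.1 ha.2 hb.1 hb.2, sat2_iff hb.1 hb.2 ha.1 ha.2]
  omega

end TravelersDilemma
end
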